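/- Let r be a positive integer and let G ≤ V(Q), with qubit set Q = Fin L × Fin L (one qubit per lattice site), be spanned by generators each of whose supports is contained in some square box of size r×r. Assume G has at least one logical qubit (dim C(G) > dim(G ∩ C(G))) and distance d. Let A, B ⊆ Q be disjoint subsets such that l(A) = 0 and |B| + |∂(Q∖A)| < d, where ∂M denotes the set of qubits outside M lying within Chebyshev distance r of some qubit of M. Then l(A ∪ B) = 0. -/

import Mathlib

set_option linter.unusedSectionVars false

open Finset Matrix

abbrev F2 : Type := ZMod 2

abbrev PauliSpace (Q : Type) := Q → F2 × F2

section Pauli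

variable {Q : Type} [Fintype Q] [DecidableEq Q]

/-- Support of a Pauli vector. -/
def psupp (v : PauliSpace Q) : Finset Q := Finset.univ.filter (fun q => v q ≠ (0, 0))

/-- Weight of a Pauli vector. -/
def pwt (v : PauliSpace Q) : ℕ := (psupp v).card

/-- The symplectic form. -/
def omegaF (u v : PauliSpace Q) : F2 :=
  ∑ q, ((u q).1 * (v q).2 + (u q).2 * (v q).1)

lemma omegaF_add_left (u v w : PauliSpace Q) :
    omegaF (u + v) w = omegaF u w + omegaF v w := by
  simp only [omegaF, Pi.add_apply, Prod.fst_add, Prod.snd_add, ← Finset.sum_add_distrib]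
  exact Finset.sum_congr rfl (fun q _ => by ring)

lemma omegaF_smul_left (c : F2) (u w : PauliSpace Q) :
    omegaF (c • u) w = c * omegaF u w := by
  simp only [omegaF, Pi.smul_apply, Prod.smul_fst, Prod.smul_snd, smul_eq_mul,
    Finset.mul_sum]
  exact Finset.sum_congr rfl (fun q _ => by ring)

/-- Centralizer of a subspace w.r.t. the symplectic form. -/
def pcent (G : Submodule F2 (PauliSpace Q)) : Submodule F2 (PauliSpace Q) where
  carrier := {v | ∀ g ∈ G, omegaF v g = 0}
  zero_mem' := by
    intro g _
    simp [omegaF]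
  add_mem' := by
    intro a b ha hb g hg
    rw [omegaF_add_left, ha g hg, hb g hg, add_zero]
  smul_mem' := by
    intro c a ha g hg
    rw [omegaF_smul_left, ha g hg, mul_zero]

/-- Stabilizer group of a gauge group. -/
def pstab (G : Submodule F2 (PauliSpace Q)) : Submodule F2 (PauliSpace Q) := G ⊓ pcent G

/-- Single-qubit Pauli X vector. -/
def Xop (c : Q) : PauliSpace Q := fun q => if q = c then (1, 0) else (0, 0)

/-- Single-qubit Pauli Z vector. -/
def Zop (c : Q) : PauliSpace Q := fun q => if q = c then (0, 1) else (0, 0)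

/-- The set of weights of dressed logical operators; its infimum is the distance. -/
def distSet (G : Submodule F2 (PauliSpace Q)) : Set ℕ :=
  {w | ∃ v, v ∈ pcent (pstab G) ∧ v ∉ G ∧ pwt v = w}

/-- Pauli vectors supported in `M`. -/
def PMod (M : Finset Q) : Submodule F2 (PauliSpace Q) where
  carrier := {v | ∀ q, q ∉ M → v q = 0}
  zero_mem' := by intro q _; rfl
  add_mem' := by
    intro a b ha hb q hq
    simp [Pi.add_apply, ha q hq, hb q hq]
  smul_mem' := by
    intro c a ha q hq
    simp [Pi.smul_apply, ha q hq]

/-- Projection onto the qubits in `M`. -/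
def projL (M : Finset Q) : PauliSpace Q →ₗ[F2] PauliSpace Q where
  toFun v := fun q => if q ∈ M then v q else 0
  map_add' a b := by funext q; by_cases h : q ∈ M <;> simp [h]
  map_smul' c a := by funext q; by_cases h : q ∈ M <;> simp [h]

/-- Number of independent dressed logical operators supported in `M`. -/
noncomputable def lM (G : Submodule F2 (PauliSpace Q)) (M : Finset Q) : ℕ :=
  Module.finrank F2 ↥(pcent ((pstab G).map (projL M)) ⊓ PMod M)
    - Module.finrank F2 ↥(G ⊓ PMod M)

/-- Number of independent bare logical operators supported in `M`. -/
noncomputable def lbareM (G : Submodule F2 (PauliSpace Q)) (M : Finset Q) : ℕ :=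
  Module.finrank F2 ↥(pcent (G.map (projL M)) ⊓ PMod M)
    - Module.finrank F2 ↥(pstab G ⊓ PMod M)

end Pauli

section Classical

variable {ι : Type} [Fintype ι] [DecidableEq ι]

/-- Hamming weight of a classical vector. -/
def hwt (v : ι → F2) : ℕ := (Finset.univ.filter (fun i => v i ≠ 0)).card

/-- Row space of a matrix. -/
def Crow (A : Matrix ι ι F2) : Submodule F2 (ι → F2) := Submodule.span F2 (Set.range A)

/-- Column space of a matrix. -/
def Ccol (A : Matrix ι ι F2) : Submodule F2 (ι → F2) := Submodule.span F2 (Set.range Aᵀ)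

/-- Minimum distance of the row space. -/
noncomputable def drow (A : Matrix ι ι F2) : ℕ := sInf {w | ∃ v ∈ Crow A, v ≠ 0 ∧ hwt v = w}

/-- Minimum distance of the column space. -/
noncomputable def dcol (A : Matrix ι ι F2) : ℕ := sInf {w | ∃ v ∈ Ccol A, v ≠ 0 ∧ hwt v = w}

/-- Number of nonzero entries of a matrix. -/
def nnz (A : Matrix ι ι F2) : ℕ :=
  (Finset.univ.filter (fun p : ι × ι => A p.1 p.2 ≠ 0)).card

end Classical

section BaconShor

variable {m : ℕ}

/-- Qubit set of the generalized Bacon-Shor code: cells with `A i j = 1`. -/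
abbrev QA (A : Matrix (Fin m) (Fin m) F2) : Type := {c : Fin m × Fin m // A c.1 c.2 = 1}

/-- Generators of the gauge group. -/
def gaugeSet (A : Matrix (Fin m) (Fin m) F2) : Set (PauliSpace (QA A)) :=
  {v | ∃ c c' : QA A, c ≠ c' ∧
    ((c.1.1 = c'.1.1 ∧ v = Xop c + Xop c') ∨ (c.1.2 = c'.1.2 ∧ v = Zop c + Zop c'))}

/-- Gauge group of the generalized Bacon-Shor code. -/
def gaugeBS (A : Matrix (Fin m) (Fin m) F2) : Submodule F2 (PauliSpace (QA A)) :=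
  Submodule.span F2 (gaugeSet A)

/-- The row operator `R i`. -/
def Rop (A : Matrix (Fin m) (Fin m) F2) (i : Fin m) : PauliSpace (QA A) :=
  ∑ c ∈ Finset.univ.filter (fun c : QA A => c.1.1 = i), Zop c

/-- The column operator `C j`. -/
def Cop (A : Matrix (Fin m) (Fin m) F2) (j : Fin m) : PauliSpace (QA A) :=
  ∑ c ∈ Finset.univ.filter (fun c : QA A => c.1.2 = j), Xop c

/-- X-type operator parameterized by a binary vector. -/
def PXop (A : Matrix (Fin m) (Fin m) F2) (x : Fin m → F2) : PauliSpace (QA A) :=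
  ∑ j, x j • Cop A j

/-- Z-type operator parameterized by a binary vector. -/
def PZop (A : Matrix (Fin m) (Fin m) F2) (z : Fin m → F2) : PauliSpace (QA A) :=
  ∑ i, z i • Rop A i

end BaconShor

/-- Binary entropy. -/
noncomputable def H2 (p : ℝ) : ℝ := -p * Real.logb 2 p - (1 - p) * Real.logb 2 (1 - p)
/-- A finite set of lattice sites is contained in some square box of size `r × r`. -/
def InBox {L : ℕ} (r : ℕ) (S : Finset (Fin L × Fin L)) : Prop :=
  ∃ a b : ℕ, ∀ p ∈ S, a ≤ (p.1 : ℕ) ∧ (p.1 : ℕ) < a + r ∧ b ≤ (p.2 : ℕ) ∧ (p.2 : ℕ) < b + r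

/-- A subspace has spatially local generators with interaction range `r`: it is spanned
by vectors each supported in some square box of size `r × r`. -/
def HasLocalGens {L : ℕ} (r : ℕ) (G : Submodule F2 (PauliSpace (Fin L × Fin L))) : Prop :=
  ∃ gens : Set (PauliSpace (Fin L × Fin L)),
    G = Submodule.span F2 gens ∧ ∀ g ∈ gens, InBox r (psupp g)

/-- Cardinality of the boundary `∂M`: the set of sites outside `M` within Chebyshev
distance `r` of some site of `M`. -/
noncomputable def bdryCard {L : ℕ} (r : ℕ) (M : Finset (Fin L × Fin L)) : ℕ :=
  Nat.card {q : Fin L × Fin L // q ∉ M ∧ ∃ p ∈ M,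
    Nat.dist (q.1 : ℕ) (p.1 : ℕ) ≤ r ∧ Nat.dist (q.2 : ℕ) (p.2 : ℕ) ≤ r}
section Aux

variable {Q : Type} [Fintype Q] [DecidableEq Q]

lemma omegaF_comm (u v : PauliSpace Q) : omegaF u v = omegaF v u := by
  unfold omegaF
  exact Finset.sum_congr rfl (fun q _ => by ring)

lemma omegaF_add_right (u v w : PauliSpace Q) :
    omegaF u (v + w) = omegaF u v + omegaF u w := by
  rw [omegaF_comm, omegaF_add_left, omegaF_comm v u, omegaF_comm w u]

lemma omegaF_smul_right (c : F2) (u w : PauliSpace Q) :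
    omegaF u (c • w) = c * omegaF u w := by
  rw [omegaF_comm, omegaF_smul_left, omegaF_comm w u]

lemma mem_PMod {M : Finset Q} {v : PauliSpace Q} :
    v ∈ PMod M ↔ ∀ q ∉ M, v q = 0 := Iff.rfl

lemma mem_pcent {G : Submodule F2 (PauliSpace Q)} {v : PauliSpace Q} :
    v ∈ pcent G ↔ ∀ g ∈ G, omegaF v g = 0 := Iff.rfl

lemma projL_apply (M : Finset Q) (v : PauliSpace Q) (q : Q) :
    projL M v q = if q ∈ M then v q else 0 := rfl

lemma projL_mem_PMod (M : Finset Q) (v : PauliSpace Q) : projL M v ∈ PMod M := by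
  intro q hq
  simp [projL_apply, hq]

lemma omegaF_projL {M : Finset Q} {v : PauliSpace Q} (hv : v ∈ PMod M)
    (s : PauliSpace Q) : omegaF v (projL M s) = omegaF v s := by
  unfold omegaF
  refine Finset.sum_congr rfl (fun q _ => ?_)
  by_cases h : q ∈ M
  · simp [projL_apply, h]
  · have := hv q h
    simp [projL_apply, h, this]

lemma omegaF_eq_zero_of_disj {v g : PauliSpace Q} (h : ∀ q, v q = 0 ∨ g q = 0) :
    omegaF v g = 0 := by
  unfold omegaF
  refine Finset.sum_eq_zero (fun q _ => ?_)
  rcases h q with h' | h' <;> simp [h']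

lemma pauli_add_self (v : PauliSpace Q) : v + v = 0 := by
  funext q
  have : ∀ a : F2, a + a = 0 := by decide
  ext <;> simp [this]

/-- G is contained in the centralizer of the stabilizer. -/
lemma gauge_le_pcent_pstab (G : Submodule F2 (PauliSpace Q)) : G ≤ pcent (pstab G) := by
  intro g hg s hs
  rw [omegaF_comm]
  exact hs.2 g hg

/-- Gauge elements supported in M commute with the projected stabilizer. -/
lemma inf_PMod_le_logical (G : Submodule F2 (PauliSpace Q)) (M : Finset Q) :
    G ⊓ PMod M ≤ pcent ((pstab G).map (projL M)) ⊓ PMod M := by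
  rintro v ⟨hvG, hvM⟩
  refine ⟨?_, hvM⟩
  rintro g ⟨s, hs, rfl⟩
  rw [omegaF_projL hvM, omegaF_comm]
  exact hs.2 v hvG

end Aux

section Dual

variable {Q : Type} [Fintype Q] [DecidableEq Q]

/-- The symplectic form as a bilinear form. -/
def omegaB : LinearMap.BilinForm F2 (PauliSpace Q) :=
  LinearMap.mk₂ F2 omegaF omegaF_add_left omegaF_smul_left omegaF_add_right omegaF_smul_right

@[simp] lemma omegaB_apply (u v : PauliSpace Q) : omegaB u v = omegaF u v := rfl

lemma omegaF_Xop (v : PauliSpace Q) (c : Q) : omegaF v (Xop c) = (v c).2 := by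
  unfold omegaF Xop
  rw [Finset.sum_eq_single c]
  · simp
  · intro q _ hq; simp [hq]
  · simp

lemma omegaF_Zop (v : PauliSpace Q) (c : Q) : omegaF v (Zop c) = (v c).1 := by
  unfold omegaF Zop
  rw [Finset.sum_eq_single c]
  · simp
  · intro q _ hq; simp [hq]
  · simp

lemma Xop_mem_PMod {N : Finset Q} {c : Q} (hc : c ∈ N) : Xop c ∈ PMod N := by
  intro q hq
  have : q ≠ c := fun h => hq (h ▸ hc)
  simp [Xop, this]

lemma Zop_mem_PMod {N : Finset Q} {c : Q} (hc : c ∈ N) : Zop c ∈ PMod N := by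
  intro q hq
  have : q ≠ c := fun h => hq (h ▸ hc)
  simp [Zop, this]

/-- Symplectic duality: if `p ∈ P(N)` is orthogonal to everything in `P(N)` that is
orthogonal to `U ≤ P(N)`, then `p ∈ U`. -/
lemma mem_of_orth_orth (N : Finset Q) (U : Submodule F2 (PauliSpace Q))
    (hU : U ≤ PMod N) (p : PauliSpace Q) (hp : p ∈ PMod N)
    (h : ∀ v ∈ PMod N, (∀ u ∈ U, omegaF v u = 0) → omegaF p v = 0) : p ∈ U := by
  set W : Submodule F2 (PauliSpace Q) := PMod N with hW
  set Bw : LinearMap.BilinForm F2 ↥W := omegaB.restrict W with hBw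
  have hrefl : Bw.IsRefl := by
    intro x y hxy
    simpa [hBw, LinearMap.BilinForm.restrict_apply, omegaF_comm] using hxy
  have hnd : Bw.Nondegenerate := by
    refine (LinearMap.IsRefl.nondegenerate_iff_separatingLeft hrefl).2 ?_
    intro ⟨v, hv⟩ hval
    have hz : ∀ q, v q = 0 := by
      intro q
      by_cases hq : q ∈ N
      · have h1 := hval ⟨Xop q, Xop_mem_PMod hq⟩
        have h2 := hval ⟨Zop q, Zop_mem_PMod hq⟩
        simp only [hBw, LinearMap.BilinForm.restrict_apply, LinearMap.domRestrict_apply,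
          omegaB_apply, omegaF_Xop, omegaF_Zop] at h1 h2
        exact Prod.ext h2 h1
      · exact hv q hq
    exact Subtype.ext (funext hz)
  set Y : Submodule F2 ↥W := U.comap W.subtype with hY
  have hmem : (⟨p, hp⟩ : ↥W) ∈ Bw.orthogonal (Bw.orthogonal Y) := by
    rw [LinearMap.BilinForm.mem_orthogonal_iff]
    rintro ⟨v, hvW⟩ hv
    rw [LinearMap.BilinForm.mem_orthogonal_iff] at hv
    have hvU : ∀ u ∈ U, omegaF v u = 0 := by
      intro u hu
      have := hv ⟨u, hU hu⟩ (by simpa [hY] using hu)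
      rw [omegaF_comm]
      simpa [hBw, LinearMap.BilinForm.restrict_apply] using this
    have := h v hvW hvU
    show Bw _ _ = 0
    simpa [hBw, LinearMap.BilinForm.restrict_apply, omegaF_comm p v] using this
  rw [LinearMap.BilinForm.orthogonal_orthogonal hnd hrefl] at hmem
  simpa [hY] using hmem

end Dual

set_option maxHeartbeats 2000000 in
/-- Lemma 5 of the paper: if `l(A) = 0` and `|B| + |∂(Q∖A)| < d` for disjoint subsets
`A, B` of the lattice, then `l(A ∪ B) = 0`. -/
theorem no_logical_in_union {L : ℕ} (r : ℕ) (hr : 0 < r)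
    (G : Submodule F2 (PauliSpace (Fin L × Fin L)))
    (hloc : HasLocalGens r G)
    (hlog : Module.finrank F2 ↥(pstab G) < Module.finrank F2 ↥(pcent G))
    (d : ℕ) (hd : d = sInf (distSet G))
    (A B : Finset (Fin L × Fin L)) (hAB : Disjoint A B)
    (hA : lM G A = 0) (hB : B.card + bdryCard r Aᶜ < d) :
    lM G (A ∪ B) = 0 := by
  classical
  obtain ⟨gens, hGspan, hgens⟩ := hloc
  -- equality for A from l(A) = 0
  have hAeq : pcent ((pstab G).map (projL A)) ⊓ PMod A = G ⊓ PMod A := by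
    have hle := inf_PMod_le_logical G A
    have hfr : Module.finrank F2 ↥(pcent ((pstab G).map (projL A)) ⊓ PMod A)
        ≤ Module.finrank F2 ↥(G ⊓ PMod A) := Nat.le_of_sub_eq_zero hA
    exact (Submodule.eq_of_le_of_finrank_le hle hfr).symm
  -- the inner boundary of A and the deep interior
  set Bd : Finset (Fin L × Fin L) := A.filter (fun q => ∃ p, p ∉ A ∧
    Nat.dist (q.1 : ℕ) (p.1 : ℕ) ≤ r ∧ Nat.dist (q.2 : ℕ) (p.2 : ℕ) ≤ r) with hBd
  set Aint : Finset (Fin L × Fin L) := A \ Bd with hAint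
  have hBdcard : Bd.card = bdryCard r Aᶜ := by
    rw [bdryCard, Nat.card_eq_fintype_card, Fintype.card_subtype, hBd]
    congr 1
    ext q
    simp [Finset.mem_compl, Prod.exists]
  -- dichotomy for local generators
  have hdich : ∀ g ∈ gens, (∀ q, q ∉ A → g q = 0) ∨ (∀ q ∈ Aint, g q = 0) := by
    intro g hg
    by_cases hex : ∃ q ∈ Aint, g q ≠ 0
    · left
      obtain ⟨q0, hq0, hq0g⟩ := hex
      intro q hq
      by_contra hgq
      obtain ⟨a, b, hbox⟩ := hgens g hg
      have hq0s : q0 ∈ psupp g := by simp [psupp, Prod.ext_iff] at hq0g ⊢; tauto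
      have hqs : q ∈ psupp g := by simp [psupp, Prod.ext_iff] at hgq ⊢; tauto
      have h1 := hbox q0 hq0s
      have h2 := hbox q hqs
      have hq0Bd : q0 ∈ Bd := by
        rw [hBd, Finset.mem_filter]
        refine ⟨(Finset.mem_sdiff.1 hq0).1, q, hq, ?_, ?_⟩ <;>
          · simp only [Nat.dist]; omega
      exact (Finset.mem_sdiff.1 hq0).2 hq0Bd
    · right
      push_neg at hex
      exact hex
  -- main inclusion
  have hkey : pcent ((pstab G).map (projL (A ∪ B))) ⊓ PMod (A ∪ B) ≤ G ⊓ PMod (A ∪ B) := by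
    rintro P ⟨hPc, hPM⟩
    refine ⟨?_, hPM⟩
    -- P commutes with the full stabilizer
    have hPcS : P ∈ pcent (pstab G) := by
      intro s hs
      rw [← omegaF_projL hPM s]
      exact hPc _ (Submodule.mem_map_of_mem hs)
    -- apply duality on the deep interior
    have hAintA : ∀ q ∈ Aint, q ∈ A := fun q hq => (Finset.mem_sdiff.1 hq).1
    set p : PauliSpace (Fin L × Fin L) := projL Aint P with hpdef
    have hpW : p ∈ PMod Aint := projL_mem_PMod Aint P
    have hUle : (G ⊓ PMod A).map (projL Aint) ≤ PMod Aint := by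
      rintro u ⟨g, _, rfl⟩
      exact projL_mem_PMod Aint g
    have hpU : p ∈ (G ⊓ PMod A).map (projL Aint) := by
      refine mem_of_orth_orth Aint _ hUle p hpW ?_
      intro v hvW hvU
      -- v commutes with every element of G ⊓ PMod A
      have hvGA : ∀ g ∈ G ⊓ PMod A, omegaF v g = 0 := by
        intro g hg
        rw [← omegaF_projL hvW g]
        exact hvU _ (Submodule.mem_map_of_mem hg)
      -- v commutes with all of G
      have hvC : v ∈ pcent G := by
        intro g hg
        rw [hGspan] at hg
        induction hg using Submodule.span_induction with
        | mem x hx =>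
          rcases hdich x hx with hx' | hx'
          · refine hvGA x ⟨?_, hx'⟩
            rw [hGspan]
            exact Submodule.subset_span hx
          · refine omegaF_eq_zero_of_disj (fun q => ?_)
            by_cases hq : q ∈ Aint
            · exact Or.inr (hx' q hq)
            · exact Or.inl (hvW q hq)
        | zero => simp [omegaF]
        | add x y _ _ hx hy => rw [omegaF_add_right, hx, hy, add_zero]
        | smul c x _ hx => rw [omegaF_smul_right, hx, mul_zero]
      -- hence v is a stabilizer element
      have hvA : v ∈ PMod A := fun q hq => hvW q (fun h => hq (hAintA q h))
      have hvG : v ∈ G := by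
        have : v ∈ pcent ((pstab G).map (projL A)) ⊓ PMod A := by
          refine ⟨?_, hvA⟩
          rintro g ⟨s, hs, rfl⟩
          rw [omegaF_projL hvA]
          exact hvC s hs.1
        rw [hAeq] at this
        exact this.1
      have hvS : v ∈ pstab G := ⟨hvG, hvC⟩
      -- conclude orthogonality with p
      calc omegaF p v = omegaF v p := omegaF_comm p v
        _ = omegaF v P := omegaF_projL hvW P
        _ = omegaF P v := omegaF_comm v P
        _ = 0 := hPcS v hvS
    obtain ⟨g, hgU, hgp⟩ := hpU
    -- the cleaned operator
    set P' : PauliSpace (Fin L × Fin L) := P + g with hP'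
    have hP'c : P' ∈ pcent (pstab G) :=
      Submodule.add_mem _ hPcS (gauge_le_pcent_pstab G hgU.1)
    have hsupp : psupp P' ⊆ B ∪ Bd := by
      intro q hq
      simp only [psupp, Finset.mem_filter, Finset.mem_univ, true_and] at hq
      by_contra hqBB
      simp only [Finset.mem_union, not_or] at hqBB
      apply hq
      by_cases hqA : q ∈ Aint
      · have : g q = P q := by
          have := congrFun hgp q
          simpa [hpdef, projL_apply, hqA] using this
        show P q + g q = 0
        rw [this]
        have := congrFun (pauli_add_self P) q
        exact this
      · have hqnA : q ∉ A := by
          intro h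
          exact hqA (Finset.mem_sdiff.2 ⟨h, fun h' => hqBB.2 h'⟩)
        have h1 : P q = 0 := hPM q (by simp [hqnA, hqBB.1])
        have h2 : g q = 0 := hgU.2 q hqnA
        show P q + g q = 0
        rw [h1, h2, add_zero]
    have hwt : pwt P' < d := by
      have h1 : pwt P' ≤ (B ∪ Bd).card := Finset.card_le_card hsupp
      have h2 : (B ∪ Bd).card ≤ B.card + Bd.card := Finset.card_union_le B Bd
      rw [hBdcard] at h2
      omega
    have hP'G : P' ∈ G := by
      by_contra hnot
      have : pwt P' ∈ distSet G := ⟨P', hP'c, hnot, rfl⟩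
      have := Nat.sInf_le this
      omega
    have : P = P' + g := by
      rw [hP', add_assoc, pauli_add_self, add_zero]
    rw [this]
    exact Submodule.add_mem _ hP'G hgU.1
  exact Nat.sub_eq_zero_of_le (Submodule.finrank_mono hkey)
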